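/- Let u be a plurisubharmonic function on a polydisc Δⁿ ⊂ ℂⁿ (n ≥ 2) whose restriction to the complement of the cone C = {z : |z_n| ≤ max(|z₁|,…,|z_{n−1}|)} is bounded above by M on an annular region {z ∈ Δⁿ : 1/2 ≤ max_i |z_i| ≤ 3/4} ∖ C. Then u ≤ M on a neighborhood of 0. In particular, a plurisubharmonic function on Δⁿ ∖ C that is locally bounded above outside C is bounded above near 0. -/

import Mathlib

open Set Metric Filter MeasureTheory

noncomputable section

/-- Plurisubharmonicity (values in `EReal`) on a set `U ⊆ ℂⁿ`. -/
def PSHOn {n : ℕ} (u : EuclideanSpace ℂ (Fin n) → EReal)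
    (U : Set (EuclideanSpace ℂ (Fin n))) : Prop :=
  UpperSemicontinuousOn u U ∧
  ∀ z ∈ U, ∀ v : EuclideanSpace ℂ (Fin n), ∀ r : ℝ, 0 < r →
    (∀ w : ℂ, ‖w‖ ≤ r → z + w • v ∈ U) →
    ∀ h : ℝ → ℝ, Continuous h →
      (∀ θ : ℝ, u (z + ((r : ℂ) * Complex.exp (θ * Complex.I)) • v) ≤ ((h θ : ℝ) : EReal)) →
      u z ≤ (((1 / (2 * Real.pi)) * ∫ θ in (0:ℝ)..(2 * Real.pi), h θ : ℝ) : EReal)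

lemma coord_le_norm {n : ℕ} (z : EuclideanSpace ℂ (Fin n)) (i : Fin n) :
    ‖z i‖ ≤ ‖z‖ := by
  have h := EuclideanSpace.norm_eq z
  rw [h]
  have h1 : ‖z i‖ ^ 2 ≤ ∑ j, ‖z j‖ ^ 2 := by
    have := Finset.single_le_sum (f := fun j => ‖z j‖ ^ 2)
      (fun j _ => sq_nonneg _) (Finset.mem_univ i)
    simpa using this
  have := Real.sqrt_le_sqrt h1
  rwa [Real.sqrt_sq (norm_nonneg _)] at this

/-- A psh function on the unit polydisc which is `≤ M` on the part of the
annulus `{1/2 ≤ max |z_i| ≤ 3/4}` lying outside the cone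
`C = {|z_n| ≤ max(|z₁|,…,|z_{n−1}|)}` satisfies `u ≤ M` near `0`. -/
theorem stmt10 {n : ℕ} (hn : 2 ≤ n) (M : ℝ)
    (u : EuclideanSpace ℂ (Fin n) → EReal)
    (hu : PSHOn u {z | ∀ i, ‖z i‖ < 1})
    (hbd : ∀ z : EuclideanSpace ℂ (Fin n),
      (1 / 2 ≤ ⨆ i, ‖z i‖) → ((⨆ i, ‖z i‖) ≤ 3 / 4) →
      ¬ (∃ i : Fin n, i ≠ ⟨n - 1, by omega⟩ ∧
          ‖z ⟨n - 1, by omega⟩‖ ≤ ‖z i‖) →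
      u z ≤ (M : EReal)) :
    ∃ ε : ℝ, 0 < ε ∧ ∀ z : EuclideanSpace ℂ (Fin n), ‖z‖ < ε → u z ≤ (M : EReal) := by
  refine ⟨1/8, by norm_num, ?_⟩
  intro z hz
  set last : Fin n := ⟨n - 1, by omega⟩ with hlast
  have hc : ∀ i, ‖z i‖ < 1/8 := fun i =>
    lt_of_le_of_lt (coord_le_norm z i) hz
  set v : EuclideanSpace ℂ (Fin n) := EuclideanSpace.single last 1 with hv
  have hvi : ∀ (w : ℂ) (i : Fin n),
      (z + w • v) i = z i + (if i = last then w else 0) := by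
    intro w i
    by_cases hi : i = last <;>
      simp [hv, hi, PiLp.add_apply, PiLp.smul_apply, EuclideanSpace.single_apply, smul_eq_mul]
  have hzU : z ∈ {z : EuclideanSpace ℂ (Fin n) | ∀ i, ‖z i‖ < 1} := by
    intro i; exact lt_trans (hc i) (by norm_num)
  have hdisc : ∀ w : ℂ, ‖w‖ ≤ 5/8 →
      z + w • v ∈ {z : EuclideanSpace ℂ (Fin n) | ∀ i, ‖z i‖ < 1} := by
    intro w hw i
    rw [hvi]
    split
    · calc ‖z i + w‖ ≤ ‖z i‖ + ‖w‖ :=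
            norm_add_le _ _
        _ < 1 := by linarith [hc i]
    · simpa using hzU i
  have hcirc : ∀ θ : ℝ,
      u (z + (((5/8 : ℝ) : ℂ) * Complex.exp (θ * Complex.I)) • v) ≤ ((M : ℝ) : EReal) := by
    intro θ
    set w : ℂ := ((5/8 : ℝ) : ℂ) * Complex.exp (θ * Complex.I) with hw
    have habsw : ‖w‖ = 5/8 := by
      rw [hw, norm_mul, Complex.norm_exp_ofReal_mul_I]
      simp
    set p := z + w • v with hp
    have hpl : p last = z last + w := by rw [hp, hvi, if_pos rfl]
    have hplast : 1/2 ≤ ‖p last‖ ∧ ‖p last‖ ≤ 3/4 := by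
      rw [hpl]
      constructor
      · have h1 : ‖w‖ - ‖z last‖ ≤ ‖z last + w‖ := by
          have := norm_add_le (z last + w) (-(z last))
          simp at this
          linarith [this]
        have := hc last
        linarith [h1, habsw.le, habsw.ge]
      · calc ‖z last + w‖ ≤ ‖z last‖ + ‖w‖ :=
            norm_add_le _ _
          _ ≤ 3/4 := by rw [habsw]; linarith [(hc last).le]
    have hpother : ∀ i, i ≠ last → ‖p i‖ < 1/8 := by
      intro i hi
      rw [hp, hvi]
      simpa [if_neg hi] using hc i
    have hne : Nonempty (Fin n) := ⟨last⟩
    have hsup_le : (⨆ i, ‖p i‖) ≤ 3/4 := by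
      apply ciSup_le
      intro i
      by_cases hi : i = last
      · rw [hi]; exact hplast.2
      · linarith [hpother i hi]
    have hsup_ge : 1/2 ≤ ⨆ i, ‖p i‖ := by
      refine le_trans hplast.1 (le_ciSup (f := fun i => ‖p i‖) ?_ last)
      exact Set.Finite.bddAbove (Set.finite_range _)
    have hnc : ¬ (∃ i : Fin n, i ≠ ⟨n - 1, by omega⟩ ∧
        ‖p ⟨n - 1, by omega⟩‖ ≤ ‖p i‖) := by
      rintro ⟨i, hi, hle⟩
      have h1 : ‖p i‖ < 1/8 := hpother i hi
      have h2 : (1/2 : ℝ) ≤ ‖p last‖ := hplast.1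
      rw [hlast] at h2
      linarith
    exact hbd p hsup_ge hsup_le hnc
  have key := hu.2 z hzU v (5/8) (by norm_num) hdisc (fun _ => M) continuous_const hcirc
  have hint : (1 / (2 * Real.pi)) * ∫ _ in (0:ℝ)..(2 * Real.pi), M = M := by
    rw [intervalIntegral.integral_const]
    have hpi := Real.pi_ne_zero
    field_simp
    simp [smul_eq_mul]
  rwa [hint] at key
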